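/- arXiv:1912.06989 — 5 statements merged into one kernel-verified Lean document; each statement's English description precedes it below -/
import Mathlib

section
/- Let φ : ℝ^m → ℝ^l be a q-order polynomial feature map, that is, each coordinate of φ(x) equals c_μ x_1^{μ_1}···x_m^{μ_m} for some nonzero constant c_μ and multi-index μ with |μ| ≤ q (one coordinate per multi-index, l = C(m+q, q)). Suppose X ∈ ℝ^{m×n} has columns x_j = f(z_j), where f : ℝ^d → ℝ^m is a polynomial map of degree at most α and z_j ∈ ℝ^d. Then rank(φ(X)) ≤ min{C(d+αq, αq), C(m+q, q), n}, where φ(X) is the l×n matrix with j-th column φ(x_j). -/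
/-- A `q`-order polynomial feature map on `ℝ^m`: coordinates are indexed by (a type in
bijection with) the multi-indices `ν` with `|ν| ≤ q`, and the coordinate for `ν` is
`c · x^ν` with a nonzero constant `c`. -/
def IsPolyFeatureMap {m : ℕ} {ι : Type} (q : ℕ) (φ : (Fin m → ℝ) → ι → ℝ) : Prop :=
  ∃ e : ι ≃ {ν : Fin m →₀ ℕ // ν.sum (fun _ t => t) ≤ q}, ∃ c : ι → ℝ,
    (∀ i, c i ≠ 0) ∧
    ∀ x i, φ x i = c i * ((e i : Fin m →₀ ℕ).prod fun k t => x k ^ t)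

/-- There is a finset of cardinality at most `(d+N).choose N` containing all multi-indices
on `Fin d` of total degree at most `N`. -/
lemma exists_finset_deg_le (d N : ℕ) :
    ∃ s : Finset (Fin d →₀ ℕ), s.card ≤ (d + N).choose N ∧
      ∀ σ : Fin d →₀ ℕ, (σ.sum fun _ t => t) ≤ N → σ ∈ s := by
  classical
  refine ⟨Finset.image (fun P : Sym (Fin (d+1)) N =>
      Finsupp.equivFunOnFinite.symm fun i : Fin d =>
        Multiset.count i.castSucc (P : Multiset (Fin (d+1)))) Finset.univ, ?_, ?_⟩
  · calc (Finset.image _ (Finset.univ : Finset (Sym (Fin (d+1)) N))).card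
        ≤ (Finset.univ : Finset (Sym (Fin (d+1)) N)).card := Finset.card_image_le
      _ = Fintype.card (Sym (Fin (d+1)) N) := Finset.card_univ
      _ = (Fintype.card (Fin (d+1)) + N - 1).choose N := Sym.card_sym_eq_choose N
      _ = (d + N).choose N := by rw [Fintype.card_fin]; congr 1; omega
  · intro σ hσ
    rw [Finset.mem_image]
    have hcard : Multiset.card
        (Multiset.replicate (N - σ.sum fun _ t => t) (Fin.last d)
          + σ.toMultiset.map Fin.castSucc) = N := by
      rw [Multiset.card_add, Multiset.card_replicate, Multiset.card_map,
        Finsupp.card_toMultiset]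
      have : (σ.sum fun _ => id) = σ.sum fun _ t => t := rfl
      rw [this]
      omega
    refine ⟨⟨_, hcard⟩, Finset.mem_univ _, ?_⟩
    ext i
    have hne : (Fin.last d) ≠ i.castSucc := (Fin.castSucc_lt_last i).ne'
    simp only [Finsupp.coe_equivFunOnFinite_symm, Sym.coe_mk]
    rw [Multiset.count_add, Multiset.count_replicate, if_neg hne,
      Multiset.count_map_eq_count' _ _ (Fin.castSucc_injective d),
      Finsupp.count_toMultiset, zero_add]

/-- If `X` has columns `f(z_j)` with `f` a polynomial map of degree ≤ α and
`φ` is a `q`-order polynomial feature map (so `l = C(m+q,q)`), then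
`rank φ(X) ≤ min (C(d+αq, αq)) (min (C(m+q,q)) n)`. -/
theorem stmt1 (d α m n q : ℕ) (hd : 0 < d) (hα : 0 < α) (hq : 0 < q)
    (ι : Type) [Fintype ι] [DecidableEq ι]
    (φ : (Fin m → ℝ) → ι → ℝ) (hφ : IsPolyFeatureMap q φ)
    (hcard : Fintype.card ι = (m + q).choose q)
    (f : (Fin d → ℝ) → (Fin m → ℝ))
    (hf : ∀ i : Fin m, ∃ p : MvPolynomial (Fin d) ℝ,
      p.totalDegree ≤ α ∧ ∀ z, f z i = MvPolynomial.eval z p)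
    (z : Fin n → (Fin d → ℝ))
    (X : Matrix (Fin m) (Fin n) ℝ)
    (hX : ∀ i j, X i j = f (z j) i)
    (φX : Matrix ι (Fin n) ℝ)
    (hφX : ∀ i j, φX i j = φ (fun t => X t j) i) :
    φX.rank ≤ min ((d + α * q).choose (α * q)) (min ((m + q).choose q) n) := by
  classical
  obtain ⟨e, c, hc, hφe⟩ := hφ
  choose p hpdeg hpeval using hf
  set N := α * q with hN
  set P : ι → MvPolynomial (Fin d) ℝ :=
    fun i => MvPolynomial.C (c i) * ((e i : Fin m →₀ ℕ).prod fun k t => (p k) ^ t) with hP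
  have hPdeg : ∀ i, (P i).totalDegree ≤ N := by
    intro i
    refine le_trans (MvPolynomial.totalDegree_mul _ _) ?_
    rw [MvPolynomial.totalDegree_C, zero_add]
    rw [Finsupp.prod]
    refine le_trans (MvPolynomial.totalDegree_finset_prod _ _) ?_
    calc ∑ k ∈ (e i : Fin m →₀ ℕ).support, ((p k) ^ ((e i : Fin m →₀ ℕ) k)).totalDegree
        ≤ ∑ k ∈ (e i : Fin m →₀ ℕ).support, α * (e i : Fin m →₀ ℕ) k := by
          refine Finset.sum_le_sum fun k _ => ?_
          refine (MvPolynomial.totalDegree_pow _ _).trans ?_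
          exact (Nat.mul_le_mul_left _ (hpdeg k)).trans_eq (Nat.mul_comm _ _)
      _ = α * ((e i : Fin m →₀ ℕ).sum fun _ t => t) := by
          rw [Finsupp.sum, Finset.mul_sum]
      _ ≤ α * q := Nat.mul_le_mul_left _ (e i).2
  have hPeval : ∀ i j, φX i j = MvPolynomial.eval (z j) (P i) := by
    intro i j
    rw [hφX, hφe, hP]
    rw [map_mul, MvPolynomial.eval_C]
    congr 1
    rw [Finsupp.prod, Finsupp.prod, map_prod]
    refine Finset.prod_congr rfl fun k _ => ?_
    rw [map_pow, ← hpeval, hX]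
  obtain ⟨s, hscard, hsmem⟩ := exists_finset_deg_le d N
  set A : Matrix ι s ℝ := fun i σ => (P i).coeff σ.1 with hA
  set B : Matrix s (Fin n) ℝ := fun σ j => σ.1.prod fun k t => z j k ^ t with hB
  have hfact : φX = A * B := by
    ext i j
    have hsub : (P i).support ⊆ s := fun σ hσ =>
      hsmem σ ((MvPolynomial.le_totalDegree hσ).trans (hPdeg i))
    calc φX i j = MvPolynomial.eval (z j) (P i) := hPeval i j
      _ = ∑ σ ∈ (P i).support, (P i).coeff σ * ∏ k ∈ σ.support, z j k ^ σ k :=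
          MvPolynomial.eval_eq _ _
      _ = ∑ σ ∈ s, (P i).coeff σ * ∏ k ∈ σ.support, z j k ^ σ k := by
          refine Finset.sum_subset hsub fun σ _ hσ => ?_
          rw [MvPolynomial.notMem_support_iff.mp hσ, zero_mul]
      _ = ∑ σ : s, (P i).coeff σ.1 * ∏ k ∈ (σ.1).support, z j k ^ σ.1 k :=
          (Finset.sum_coe_sort s _).symm
      _ = (A * B) i j := by rw [Matrix.mul_apply]; rfl
  refine le_min ?_ (le_min ?_ ?_)
  · calc φX.rank = (A * B).rank := by rw [hfact]
      _ ≤ B.rank := (Matrix.rank_mul_le A B).trans (min_le_right _ _)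
      _ ≤ Fintype.card s := Matrix.rank_le_card_height B
      _ = s.card := Fintype.card_coe s
      _ ≤ (d + N).choose N := hscard
  · calc φX.rank ≤ Fintype.card ι := Matrix.rank_le_card_height φX
      _ = (m + q).choose q := hcard
  · calc φX.rank ≤ Fintype.card (Fin n) := Matrix.rank_le_card_width φX
      _ = n := Fintype.card_fin n
end

section
/- Let q and d̃ be positive integers and define r̃ := min{o ∈ ℕ : C(o+q, q) ≥ d̃}. Then (q! · d̃)^{1/q} − q ≤ r̃ ≤ (q! · d̃)^{1/q}. -/
/-- With `r̃ := min {o : C(o+q,q) ≥ d̃}`, one has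
`(q!·d̃)^{1/q} − q ≤ r̃ ≤ (q!·d̃)^{1/q}`. -/
theorem stmt2 (q dt : ℕ) (hq : 0 < q) (hdt : 0 < dt)
    (rt : ℕ) (hrt : rt = sInf {o : ℕ | dt ≤ (o + q).choose q}) :
    ((q.factorial * dt : ℝ) ^ ((1 : ℝ) / q) - q ≤ (rt : ℝ)) ∧
      ((rt : ℝ) ≤ (q.factorial * dt : ℝ) ^ ((1 : ℝ) / q)) := by
  have hq0 : (q : ℝ) ≠ 0 := Nat.cast_ne_zero.2 hq.ne'
  set x : ℝ := (q.factorial * dt : ℝ) ^ ((1 : ℝ) / q) with hx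
  have hA : (0 : ℝ) ≤ (q.factorial * dt : ℝ) := by positivity
  have hxnn : 0 ≤ x := Real.rpow_nonneg hA _
  -- x ^ q = q! * dt
  have hxq : x ^ q = (q.factorial * dt : ℝ) := by
    rw [hx, ← Real.rpow_natCast (_ ^ _) q, ← Real.rpow_mul hA,
      one_div, inv_mul_cancel₀ hq0, Real.rpow_one]
  -- key nat bounds: (o+1)^q ≤ q! * C(o+q,q) ≤ (o+q)^q
  have key_lo : ∀ o : ℕ, (o + 1) ^ q ≤ q.factorial * (o + q).choose q := by
    intro o
    have := Nat.pow_sub_le_descFactorial (o + q) q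
    have he : o + q + 1 - q = o + 1 := by omega
    rwa [Nat.descFactorial_eq_factorial_mul_choose, he] at this
  have key_hi : ∀ o : ℕ, q.factorial * (o + q).choose q ≤ (o + q) ^ q := by
    intro o
    have := Nat.descFactorial_le_pow (o + q) q
    rwa [Nat.descFactorial_eq_factorial_mul_choose] at this
  -- the floor of x is in the set
  set o₀ : ℕ := ⌊x⌋₊ with ho₀
  have hmem : o₀ ∈ {o : ℕ | dt ≤ (o + q).choose q} := by
    have hxlt : x < (o₀ : ℝ) + 1 := Nat.lt_floor_add_one x
    have h1 : (q.factorial * dt : ℝ) ≤ ((o₀ + 1 : ℕ) : ℝ) ^ q := by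
      rw [← hxq]
      push_cast
      exact pow_le_pow_left₀ hxnn hxlt.le q
    have h2 : q.factorial * dt ≤ (o₀ + 1) ^ q := by exact_mod_cast h1
    have h3 : q.factorial * dt ≤ q.factorial * (o₀ + q).choose q :=
      h2.trans (key_lo o₀)
    exact Nat.le_of_mul_le_mul_left h3 q.factorial_pos
  have hrt_le : rt ≤ o₀ := hrt ▸ Nat.sInf_le hmem
  have hrt_mem : dt ≤ (rt + q).choose q := by
    have := Nat.sInf_mem ⟨o₀, hmem⟩
    rwa [← hrt] at this
  constructor
  · -- lower bound: x ≤ rt + q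
    have h1 : (q.factorial * dt : ℝ) ≤ ((rt + q : ℕ) : ℝ) ^ q := by
      have : q.factorial * dt ≤ (rt + q) ^ q :=
        (Nat.mul_le_mul_left _ hrt_mem).trans (key_hi rt)
      exact_mod_cast this
    have h2 : x ≤ ((rt + q : ℕ) : ℝ) := by
      calc x ≤ (((rt + q : ℕ) : ℝ) ^ q) ^ ((1 : ℝ) / q) :=
              Real.rpow_le_rpow hA h1 (by positivity)
        _ = ((rt + q : ℕ) : ℝ) := by
              rw [← Real.rpow_natCast ((rt + q : ℕ) : ℝ) q, ← Real.rpow_mul (by positivity),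
                mul_one_div, div_self hq0, Real.rpow_one]
    push_cast at h2
    linarith
  · -- upper bound: rt ≤ x
    calc (rt : ℝ) ≤ (o₀ : ℝ) := Nat.cast_le.2 hrt_le
      _ ≤ x := Nat.floor_le hxnn
end

section
/- Let K ∈ ℝ^{n×n} be a symmetric positive semidefinite matrix with eigenvalues λ_1 ≥ λ_2 ≥ ··· ≥ λ_n ≥ 0, let 0 < p ≤ 1, and let 1 ≤ s ≤ n. Then the maximum of Tr((PᵀKP)^{p/2}) over all matrices P ∈ ℝ^{n×s} with PᵀP = I_s equals λ_1^{p/2} + λ_2^{p/2} + ··· + λ_s^{p/2}, and this maximum is attained when the columns of P are eigenvectors of K corresponding to the s largest eigenvalues. -/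
open scoped Matrix
open Matrix

/-- `Tr(A^r)` for a symmetric PSD matrix, defined spectrally as the sum of the `r`-th
powers of the eigenvalues. -/
noncomputable def trRpow {n : ℕ} (A : Matrix (Fin n) (Fin n) ℝ) (r : ℝ) : ℝ :=
  if h : A.IsHermitian then ∑ i, (h.eigenvalues i) ^ r else 0

lemma quad_conj {n m : ℕ} (U : Matrix (Fin n) (Fin m) ℝ) (D : Matrix (Fin m) (Fin m) ℝ)
    (y : Fin n → ℝ) :
    y ⬝ᵥ ((U * D * Uᵀ) *ᵥ y) = (Uᵀ *ᵥ y) ⬝ᵥ (D *ᵥ (Uᵀ *ᵥ y)) := by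
  rw [← mulVec_mulVec, ← mulVec_mulVec, dotProduct_mulVec, ← mulVec_transpose]

lemma dot_diag {m : ℕ} (d : Fin m → ℝ) (x : Fin m → ℝ) :
    x ⬝ᵥ (Matrix.diagonal d *ᵥ x) = ∑ i, d i * (x i * x i) := by
  simp only [dotProduct, mulVec_diagonal]
  exact Finset.sum_congr rfl fun i _ => by ring

lemma quad_compress {n m : ℕ} (P : Matrix (Fin n) (Fin m) ℝ) (A : Matrix (Fin n) (Fin n) ℝ)
    (z : Fin m → ℝ) :
    z ⬝ᵥ ((Pᵀ * A * P) *ᵥ z) = (P *ᵥ z) ⬝ᵥ (A *ᵥ (P *ᵥ z)) := by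
  rw [← mulVec_mulVec, ← mulVec_mulVec, dotProduct_mulVec, vecMul_transpose]

lemma dot_self_pos {m : ℕ} {x : Fin m → ℝ} (hx : x ≠ 0) : 0 < x ⬝ᵥ x := by
  rcases Function.ne_iff.mp hx with ⟨i, hi⟩
  have : (0:ℝ) < x i * x i := mul_self_pos.mpr (by simpa using hi)
  calc (0:ℝ) < x i * x i := this
    _ ≤ ∑ j, x j * x j := Finset.single_le_sum (fun j _ => mul_self_nonneg (x j)) (Finset.mem_univ i)

-- isometry preserves dot products (of the quadratic kind)
lemma dot_isometry {n m : ℕ} {P : Matrix (Fin n) (Fin m) ℝ} (hP : Pᵀ * P = 1)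
    (x : Fin m → ℝ) : (P *ᵥ x) ⬝ᵥ (P *ᵥ x) = x ⬝ᵥ x := by
  rw [dotProduct_mulVec, ← mulVec_transpose, mulVec_mulVec, hP, one_mulVec]

lemma mulVec_isometry_left {n m : ℕ} {P : Matrix (Fin n) (Fin m) ℝ} (hP : Pᵀ * P = 1)
    (x : Fin m → ℝ) : Pᵀ *ᵥ (P *ᵥ x) = x := by
  rw [mulVec_mulVec, hP, one_mulVec]

/-- Core interlacing-type inequality: the `k`-th (antitone-sorted) eigenvalue of the
compression `Pᵀ A P` of `A = U diag(d) Uᵀ` is at most `d k`. -/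
lemma eig_compress_le {n m : ℕ} (hmn : m ≤ n)
    (U : Matrix (Fin n) (Fin n) ℝ) (d : Fin n → ℝ) (hU : Uᵀ * U = 1) (hd : Antitone d)
    (W : Matrix (Fin m) (Fin m) ℝ) (e : Fin m → ℝ) (hW : Wᵀ * W = 1) (he : Antitone e)
    (P : Matrix (Fin n) (Fin m) ℝ) (hP : Pᵀ * P = 1)
    (hB : Pᵀ * (U * Matrix.diagonal d * Uᵀ) * P = W * Matrix.diagonal e * Wᵀ)
    (k : Fin m) : e k ≤ d (Fin.castLE hmn k) := by
  have hk1 : (k : ℕ) + 1 ≤ m := k.isLt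
  have hkn : (k : ℕ) ≤ n := le_trans (le_of_lt k.isLt) hmn
  set ι : Fin ((k:ℕ)+1) → Fin m := Fin.castLE hk1 with hι
  set κ : Fin (k:ℕ) → Fin n := Fin.castLE hkn with hκ
  set L : (Fin ((k:ℕ)+1) → ℝ) →ₗ[ℝ] (Fin (k:ℕ) → ℝ) :=
    (LinearMap.funLeft ℝ ℝ κ) ∘ₗ (Uᵀ).mulVecLin ∘ₗ P.mulVecLin ∘ₗ W.mulVecLin
      ∘ₗ (Function.ExtendByZero.linearMap ℝ ι) with hL
  obtain ⟨c, hcL, hc0⟩ : ∃ c, c ∈ LinearMap.ker L ∧ c ≠ 0 := by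
    rw [← Submodule.ne_bot_iff, Ne, LinearMap.ker_eq_bot]
    intro hinj
    have := LinearMap.finrank_le_finrank_of_injective hinj
    simp [Module.finrank_pi] at this
  have hLc : L c = 0 := hcL
  set x : Fin m → ℝ := Function.extend ι c 0 with hx
  set z : Fin n → ℝ := P *ᵥ (W *ᵥ x) with hz
  set b : Fin n → ℝ := Uᵀ *ᵥ z with hb
  have hxι : ∀ i, x (ι i) = c i := fun i =>
    (Fin.castLE_injective hk1).extend_apply c 0 i
  have hx0 : x ≠ 0 := by
    intro h
    apply hc0
    funext i
    have := hxι i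
    rw [h] at this
    simpa using this.symm
  have hxsupp : ∀ j : Fin m, (k : ℕ) < (j : ℕ) → x j = 0 := by
    intro j hj
    rw [hx]
    rw [Function.extend_apply']
    · rfl
    · rintro ⟨a, rfl⟩
      have : (a : ℕ) < (k : ℕ) + 1 := a.isLt
      simp only [hι, Fin.coe_castLE] at hj
      omega
  have hb0 : ∀ i : Fin n, (i : ℕ) < (k : ℕ) → b i = 0 := by
    intro i hik
    have h0 : L c (⟨(i : ℕ), hik⟩ : Fin (k : ℕ)) = 0 := by rw [hLc]; rfl
    have h1 : L c (⟨(i : ℕ), hik⟩ : Fin (k : ℕ)) = b (κ ⟨(i : ℕ), hik⟩) := rfl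
    have h2 : κ (⟨(i : ℕ), hik⟩ : Fin (k : ℕ)) = i := by
      rw [hκ]; exact Fin.ext rfl
    rw [h1, h2] at h0
    exact h0
  have hQd : z ⬝ᵥ ((U * Matrix.diagonal d * Uᵀ) *ᵥ z) = ∑ i, d i * (b i * b i) := by
    rw [quad_conj, dot_diag]
  have hWz : Wᵀ *ᵥ (W *ᵥ x) = x := mulVec_isometry_left hW x
  have hQe : z ⬝ᵥ ((U * Matrix.diagonal d * Uᵀ) *ᵥ z) = ∑ j, e j * (x j * x j) := by
    rw [hz, ← quad_compress, hB, quad_conj, hWz, dot_diag]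
  have hbb : b ⬝ᵥ b = x ⬝ᵥ x := by
    have hUU : (Uᵀ)ᵀ * Uᵀ = 1 := by
      rw [transpose_transpose]; exact mul_eq_one_comm.mp hU
    rw [hb, dot_isometry hUU, hz, dot_isometry hP, dot_isometry hW]
  have h1 : e k * (x ⬝ᵥ x) ≤ ∑ j, e j * (x j * x j) := by
    rw [dotProduct, Finset.mul_sum]
    apply Finset.sum_le_sum
    intro j _
    by_cases hj : (k : ℕ) < (j : ℕ)
    · rw [hxsupp j hj]; simp
    · have hjk : j ≤ k := not_lt.mp hj
      exact mul_le_mul_of_nonneg_right (he hjk) (mul_self_nonneg _)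
  have h2 : ∑ i, d i * (b i * b i) ≤ d (Fin.castLE hmn k) * (b ⬝ᵥ b) := by
    rw [dotProduct, Finset.mul_sum]
    apply Finset.sum_le_sum
    intro i _
    by_cases hik : (i : ℕ) < (k : ℕ)
    · rw [hb0 i hik]; simp
    · have : Fin.castLE hmn k ≤ i := not_lt.mp hik
      exact mul_le_mul_of_nonneg_right (hd this) (mul_self_nonneg _)
  have hxx : 0 < x ⬝ᵥ x := dot_self_pos hx0
  have : e k * (x ⬝ᵥ x) ≤ d (Fin.castLE hmn k) * (x ⬝ᵥ x) := by
    calc e k * (x ⬝ᵥ x) ≤ ∑ j, e j * (x j * x j) := h1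
      _ = ∑ i, d i * (b i * b i) := by rw [← hQe, hQd]
      _ ≤ d (Fin.castLE hmn k) * (b ⬝ᵥ b) := h2
      _ = d (Fin.castLE hmn k) * (x ⬝ᵥ x) := by rw [hbb]
  exact le_of_mul_le_mul_right this hxx

lemma compress_entry {n m : ℕ} (A : Matrix (Fin n) (Fin n) ℝ) (V : Matrix (Fin n) (Fin n) ℝ)
    (f : Fin m → Fin n) (a b : Fin m) :
    ((V.submatrix id f)ᵀ * A * (V.submatrix id f)) a b = (Vᵀ * A * V) (f a) (f b) := by
  simp only [Matrix.mul_apply, Matrix.transpose_apply, Matrix.submatrix_apply, id_eq]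

lemma real_conjTranspose {m n : ℕ} (M : Matrix (Fin m) (Fin n) ℝ) : Mᴴ = Mᵀ := by
  ext i j; simp [Matrix.conjTranspose_apply]

lemma mdm_apply {m m' : ℕ} (M : Matrix (Fin m) (Fin m') ℝ) (v : Fin m' → ℝ) (i j : Fin m) :
    (M * Matrix.diagonal v * Mᵀ) i j = ∑ a, M i a * v a * M j a := by
  simp only [Matrix.mul_apply, Matrix.transpose_apply, Matrix.diagonal_apply, mul_ite, mul_zero,
    ite_mul, zero_mul, Finset.sum_ite_eq, Finset.sum_ite_eq', Finset.mem_univ, if_true]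

/-- every real Hermitian matrix has an antitone-sorted orthogonal diagonalization. -/
lemma exists_antitone_decomp {m : ℕ} (A : Matrix (Fin m) (Fin m) ℝ) (hA : A.IsHermitian) :
    ∃ (W : Matrix (Fin m) (Fin m) ℝ) (ν : Fin m → ℝ) (τ : Equiv.Perm (Fin m)),
      Wᵀ * W = 1 ∧ A = W * Matrix.diagonal ν * Wᵀ ∧ Antitone ν ∧ ν = hA.eigenvalues ∘ τ := by
  set W₀ : Matrix (Fin m) (Fin m) ℝ := (hA.eigenvectorUnitary : Matrix (Fin m) (Fin m) ℝ)
    with hW₀def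
  set μ : Fin m → ℝ := hA.eigenvalues with hμdef
  have hstar : star W₀ = W₀ᵀ := real_conjTranspose W₀
  have hW₀ : W₀ᵀ * W₀ = 1 := by
    rw [← hstar]
    exact (Matrix.mem_unitaryGroup_iff'.mp (hA.eigenvectorUnitary).2)
  have hofs : (RCLike.ofReal ∘ μ : Fin m → ℝ) = μ := by
    funext i; simp
  have hspec : A = W₀ * Matrix.diagonal μ * W₀ᵀ := by
    have := hA.spectral_theorem
    rw [Unitary.conjStarAlgAut_apply, ← hW₀def] at this
    rwa [hstar] at this
  set σ : Equiv.Perm (Fin m) := Tuple.sort μ with hσ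
  set τ : Equiv.Perm (Fin m) := Fin.revPerm.trans σ with hτ
  have hmono : Monotone (μ ∘ σ) := Tuple.monotone_sort μ
  refine ⟨W₀.submatrix id τ, μ ∘ τ, τ, ?_, ?_, ?_, rfl⟩
  · ext a b
    have h := congr_fun (congr_fun hW₀ (τ a)) (τ b)
    simp only [Matrix.mul_apply, Matrix.transpose_apply, Matrix.submatrix_apply, id] at h ⊢
    rw [h]
    by_cases hab : a = b
    · subst hab; simp [Matrix.one_apply]
    · rw [Matrix.one_apply_ne (fun hc => hab (τ.injective hc)), Matrix.one_apply_ne hab]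
  · rw [hspec]
    ext i j
    rw [mdm_apply, mdm_apply]
    simp only [Matrix.submatrix_apply, Function.comp_apply, id]
    exact (Equiv.sum_comp τ (fun b => W₀ i b * μ b * W₀ j b)).symm
  · intro a b hab
    have : Fin.rev b ≤ Fin.rev a := Fin.rev_le_rev.mpr hab
    exact hmono this

lemma antitone_decomp_eq {m : ℕ} {U W : Matrix (Fin m) (Fin m) ℝ} {d e : Fin m → ℝ}
    (hU : Uᵀ * U = 1) (hd : Antitone d) (hW : Wᵀ * W = 1) (he : Antitone e)
    (hAB : U * Matrix.diagonal d * Uᵀ = W * Matrix.diagonal e * Wᵀ) : d = e := by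
  have h1 : ∀ g : Fin m, e g ≤ d g := by
    intro g
    have := eig_compress_le (le_refl m) U d hU hd W e hW he 1 (by simp)
      (by simpa using hAB) g
    simpa using this
  have h2 : ∀ g : Fin m, d g ≤ e g := by
    intro g
    have := eig_compress_le (le_refl m) W e hW he U d hU hd 1 (by simp)
      (by simpa using hAB.symm) g
    simpa using this
  exact funext fun g => le_antisymm (h2 g) (h1 g)

lemma isHermitian_of_decomp {m : ℕ} (U : Matrix (Fin m) (Fin m) ℝ) (d : Fin m → ℝ) :
    (U * Matrix.diagonal d * Uᵀ).IsHermitian := by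
  have : (U * Matrix.diagonal d * Uᵀ)ᴴ = U * Matrix.diagonal d * Uᵀ := by
    rw [Matrix.conjTranspose_mul, Matrix.conjTranspose_mul, real_conjTranspose,
      real_conjTranspose, real_conjTranspose, Matrix.transpose_transpose,
      Matrix.diagonal_transpose, Matrix.mul_assoc]
  exact this

lemma trRpow_of_antitone_decomp {m : ℕ} (A U : Matrix (Fin m) (Fin m) ℝ) (d : Fin m → ℝ)
    (hU : Uᵀ * U = 1) (hA : A = U * Matrix.diagonal d * Uᵀ) (hd : Antitone d) (r : ℝ) :
    trRpow A r = ∑ i, d i ^ r := by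
  have hH : A.IsHermitian := hA ▸ isHermitian_of_decomp U d
  obtain ⟨W, ν, τ, hW, hAν, hν, hντ⟩ := exists_antitone_decomp A hH
  have hdν : d = ν := antitone_decomp_eq hU hd hW hν (hA.symm.trans hAν)
  rw [trRpow, dif_pos hH]
  calc ∑ i, hH.eigenvalues i ^ r = ∑ i, hH.eigenvalues (τ i) ^ r :=
        (Equiv.sum_comp τ (fun i => hH.eigenvalues i ^ r)).symm
    _ = ∑ i, ν i ^ r := by rw [hντ]; rfl
    _ = ∑ i, d i ^ r := by rw [hdν]

/-- for symmetric PSD `K` with eigenvalues `λ₁ ≥ ⋯ ≥ λₙ ≥ 0`, `0 < p ≤ 1`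
and `1 ≤ s ≤ n`, the maximum of `Tr((PᵀKP)^{p/2})` over `P` with `PᵀP = I_s` equals
`λ₁^{p/2} + ⋯ + λ_s^{p/2}`, attained when the columns of `P` are eigenvectors of `K`
for the `s` largest eigenvalues. -/
theorem stmt3 (n s : ℕ) (hs1 : 1 ≤ s) (hsn : s ≤ n) (p : ℝ) (hp0 : 0 < p) (hp1 : p ≤ 1)
    (K : Matrix (Fin n) (Fin n) ℝ) (hK : K.PosSemidef)
    (V : Matrix (Fin n) (Fin n) ℝ) (lam : Fin n → ℝ)
    (hV : Vᵀ * V = 1) (hVK : K = V * Matrix.diagonal lam * Vᵀ)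
    (hsort : Antitone lam) (hpos : ∀ i, 0 ≤ lam i) :
    IsGreatest
      {t : ℝ | ∃ P : Matrix (Fin n) (Fin s) ℝ, Pᵀ * P = 1 ∧ t = trRpow (Pᵀ * K * P) (p / 2)}
      (∑ i : Fin s, lam (Fin.castLE hsn i) ^ (p / 2)) ∧
    trRpow ((V.submatrix id (Fin.castLE hsn))ᵀ * K * V.submatrix id (Fin.castLE hsn)) (p / 2)
      = ∑ i : Fin s, lam (Fin.castLE hsn i) ^ (p / 2) := by
  set f : Fin s → Fin n := Fin.castLE hsn with hf
  set P₀ : Matrix (Fin n) (Fin s) ℝ := V.submatrix id f with hP₀def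
  have hfmono : ∀ {a b : Fin s}, a ≤ b → f a ≤ f b := fun {a b} hab => hab
  have hlamf : Antitone (lam ∘ f) := fun a b hab => hsort (hfmono hab)
  -- P₀ is an isometry
  have hP₀ : P₀ᵀ * P₀ = 1 := by
    ext a b
    have h := congr_fun (congr_fun hV (f a)) (f b)
    simp only [Matrix.mul_apply, Matrix.transpose_apply, Matrix.submatrix_apply, id,
      hP₀def] at h ⊢
    rw [h]
    by_cases hab : a = b
    · subst hab; simp [Matrix.one_apply]
    · rw [Matrix.one_apply_ne (fun hc => hab (Fin.castLE_injective hsn hc)),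
        Matrix.one_apply_ne hab]
  -- conjugating K by V gives the diagonal
  have hVKV : Vᵀ * K * V = Matrix.diagonal lam := by
    rw [hVK]
    have : Vᵀ * (V * Matrix.diagonal lam * Vᵀ) * V
        = (Vᵀ * V) * Matrix.diagonal lam * (Vᵀ * V) := by
      simp only [Matrix.mul_assoc]
    rw [this, hV, Matrix.one_mul, Matrix.mul_one]
  -- the compression by P₀ is the truncated diagonal
  have hP₀K : P₀ᵀ * K * P₀ = Matrix.diagonal (lam ∘ f) := by
    ext a b
    have h : (P₀ᵀ * K * P₀) a b = (Vᵀ * K * V) (f a) (f b) := by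
      rw [hP₀def]; exact compress_entry K V f a b
    rw [h, hVKV]
    by_cases hab : a = b
    · subst hab; simp
    · rw [Matrix.diagonal_apply_ne _ (fun hc => hab (Fin.castLE_injective hsn hc)),
        Matrix.diagonal_apply_ne _ hab]
  -- the value at P₀
  have hval : trRpow (P₀ᵀ * K * P₀) (p / 2) = ∑ i : Fin s, lam (f i) ^ (p / 2) := by
    rw [hP₀K]
    exact trRpow_of_antitone_decomp _ 1 (lam ∘ f) (by simp) (by simp) hlamf (p / 2)
  refine ⟨⟨⟨P₀, hP₀, hval.symm⟩, ?_⟩, hval⟩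
  rintro t ⟨P, hP, rfl⟩
  set M : Matrix (Fin s) (Fin s) ℝ := Pᵀ * K * P with hM
  have hKt : Kᵀ = K := by rw [← real_conjTranspose]; exact hK.1
  have hMherm : M.IsHermitian := by
    have : Mᴴ = M := by
      rw [hM, Matrix.conjTranspose_mul, Matrix.conjTranspose_mul, real_conjTranspose P,
        real_conjTranspose K, real_conjTranspose Pᵀ, Matrix.transpose_transpose, hKt,
        Matrix.mul_assoc]
    exact this
  have hMpsd : M.PosSemidef := by
    refine .of_dotProduct_mulVec_nonneg hMherm fun x => ?_
    have h1 : star x = x := by funext i; simp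
    have h2 : star (P *ᵥ x) = P *ᵥ x := by funext i; simp
    have := hK.dotProduct_mulVec_nonneg (P *ᵥ x)
    rw [h2] at this
    rw [h1, hM, quad_compress]
    exact this
  obtain ⟨W, ν, τ, hW, hMν, hν, hντ⟩ := exists_antitone_decomp M hMherm
  have hνnonneg : ∀ k, 0 ≤ ν k := by
    intro k
    rw [hντ]
    exact hMpsd.eigenvalues_nonneg (τ k)
  have hkey : ∀ k : Fin s, ν k ≤ lam (f k) := by
    intro k
    exact eig_compress_le hsn V lam hV hsort W ν hW hν P hP
      (by rw [← hVK]; exact hM ▸ hMν) k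
  have hμsum : trRpow M (p / 2) = ∑ k, ν k ^ (p / 2) := by
    rw [trRpow, dif_pos hMherm]
    calc ∑ i, hMherm.eigenvalues i ^ (p / 2)
        = ∑ i, hMherm.eigenvalues (τ i) ^ (p / 2) :=
          (Equiv.sum_comp τ (fun i => hMherm.eigenvalues i ^ (p / 2))).symm
      _ = ∑ k, ν k ^ (p / 2) := by rw [hντ]; rfl
  rw [hμsum]
  apply Finset.sum_le_sum
  intro k _
  exact Real.rpow_le_rpow (hνnonneg k) (hkey k) (by positivity)
end

section
/- Let Φ ∈ ℝ^{l×n} with n ≤ l, singular values σ_1 ≥ ··· ≥ σ_n, let 0 < p ≤ 1, let 1 ≤ s ≤ n, and let K = ΦᵀΦ. Then Σ_{i=s+1}^{n} σ_i^p = Tr(K^{p/2}) − max{ Tr((PᵀKP)^{p/2}) : P ∈ ℝ^{n×s}, PᵀP = I_s }. -/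
open scoped Matrix

open Finset Polynomial in
/-- Real spectral theorem in orthogonal-matrix form. -/
private lemma exists_orthog {m : ℕ} {A : Matrix (Fin m) (Fin m) ℝ} (hA : A.IsHermitian) :
    ∃ Q : Matrix (Fin m) (Fin m) ℝ, Qᵀ * Q = 1 ∧
      A = Q * Matrix.diagonal hA.eigenvalues * Qᵀ := by
  refine ⟨(hA.eigenvectorUnitary : Matrix (Fin m) (Fin m) ℝ), ?_, ?_⟩
  · rw [← Matrix.conjTranspose_eq_transpose_of_trivial]
    exact Matrix.mem_unitaryGroup_iff'.mp hA.eigenvectorUnitary.2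
  · have := hA.spectral_theorem
    rw [← Matrix.conjTranspose_eq_transpose_of_trivial]
    simpa [Matrix.star_eq_conjTranspose] using this

open Finset Polynomial in
private lemma charpoly_orth_conj {m : ℕ} (U D : Matrix (Fin m) (Fin m) ℝ) (hU : Uᵀ * U = 1) :
    (U * D * Uᵀ).charpoly = D.charpoly := by
  have hU' : U * Uᵀ = 1 := mul_eq_one_comm.mp hU
  have hsc : (C : ℝ →+* ℝ[X]).mapMatrix U * ((Matrix.scalar (Fin m)) X *
      (C : ℝ →+* ℝ[X]).mapMatrix Uᵀ) = (Matrix.scalar (Fin m)) X := by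
    rw [(Matrix.scalar_commute (X : ℝ[X]) (fun r' => Commute.all _ _)
      ((C : ℝ →+* ℝ[X]).mapMatrix Uᵀ)).eq, ← mul_assoc, ← map_mul, hU', map_one, one_mul]
  have hcm : Matrix.charmatrix (U * D * Uᵀ)
      = (C : ℝ →+* ℝ[X]).mapMatrix U * Matrix.charmatrix D * (C : ℝ →+* ℝ[X]).mapMatrix Uᵀ := by
    unfold Matrix.charmatrix
    rw [mul_sub, sub_mul]
    congr 1
    · rw [mul_assoc, hsc]
    · rw [← map_mul, ← map_mul]
  rw [Matrix.charpoly, Matrix.charpoly, hcm, Matrix.det_mul, Matrix.det_mul]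
  have h1 : ((C : ℝ →+* ℝ[X]).mapMatrix U).det * ((C : ℝ →+* ℝ[X]).mapMatrix Uᵀ).det = 1 := by
    rw [← Matrix.det_mul, ← map_mul, hU', map_one, Matrix.det_one]
  linear_combination (Matrix.charmatrix D).det * h1

open Finset Polynomial in
/-- The multiset of mathlib eigenvalues equals the multiset of `d` when `A = U diag d Uᵀ`. -/
private lemma eig_multiset {m : ℕ} {A : Matrix (Fin m) (Fin m) ℝ} (hA : A.IsHermitian)
    {U : Matrix (Fin m) (Fin m) ℝ} (hU : Uᵀ * U = 1) (d : Fin m → ℝ)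
    (hAd : A = U * Matrix.diagonal d * Uᵀ) :
    Multiset.map hA.eigenvalues Finset.univ.val = Multiset.map d Finset.univ.val := by
  obtain ⟨Q, hQ, hAQ⟩ := exists_orthog hA
  have h1 : A.charpoly = ∏ i, (X - C (d i)) := by
    rw [congrArg Matrix.charpoly hAd, charpoly_orth_conj _ _ hU,
      Matrix.charpoly_of_upperTriangular _ (Matrix.blockTriangular_diagonal d)]
    simp
  have h2 : A.charpoly = ∏ i, (X - C (hA.eigenvalues i)) := by
    rw [congrArg Matrix.charpoly hAQ, charpoly_orth_conj _ _ hQ,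
      Matrix.charpoly_of_upperTriangular _ (Matrix.blockTriangular_diagonal _)]
    simp
  have h3 : ∀ g : Fin m → ℝ, (∏ i, (X - C (g i))).roots = Multiset.map g Finset.univ.val := by
    intro g
    rw [Finset.prod_eq_multiset_prod,
      show (fun i => X - C (g i)) = ((fun a => X - C a) ∘ g) from rfl, ← Multiset.map_map]
    exact roots_multiset_prod_X_sub_C _
  rw [← h3, ← h3, ← h1, ← h2]

open Finset in
private lemma sum_f_eigen {m : ℕ} {A : Matrix (Fin m) (Fin m) ℝ} (hA : A.IsHermitian)
    {U : Matrix (Fin m) (Fin m) ℝ} (hU : Uᵀ * U = 1) (d : Fin m → ℝ)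
    (hAd : A = U * Matrix.diagonal d * Uᵀ) (g : ℝ → ℝ) :
    ∑ i, g (hA.eigenvalues i) = ∑ i, g (d i) := by
  have h := eig_multiset hA hU d hAd
  calc ∑ i, g (hA.eigenvalues i)
      = ((Multiset.map hA.eigenvalues Finset.univ.val).map g).sum := by
        rw [Multiset.map_map]; rfl
  _ = ((Multiset.map d Finset.univ.val).map g).sum := by rw [h]
  _ = ∑ i, g (d i) := by rw [Multiset.map_map]; rfl

open Finset in
private lemma count_f_eigen {m : ℕ} {A : Matrix (Fin m) (Fin m) ℝ} (hA : A.IsHermitian)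
    {U : Matrix (Fin m) (Fin m) ℝ} (hU : Uᵀ * U = 1) (d : Fin m → ℝ)
    (hAd : A = U * Matrix.diagonal d * Uᵀ) (c : ℝ) :
    (Finset.univ.filter fun i => c < hA.eigenvalues i).card
      = (Finset.univ.filter fun i => c < d i).card := by
  classical
  have h := eig_multiset hA hU d hAd
  have key : ∀ v : Fin m → ℝ, (Finset.univ.filter fun i => c < v i).card
      = Multiset.countP (fun x => c < x) (Multiset.map v Finset.univ.val) := by
    intro v
    rw [Multiset.countP_map]
    rfl
  rw [key, key, h]

private lemma conj_dot {α β : Type*} [Fintype α] [Fintype β] (G : Matrix α β ℝ)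
    (A : Matrix α α ℝ) (v : β → ℝ) :
    (G *ᵥ v) ⬝ᵥ (A *ᵥ (G *ᵥ v)) = v ⬝ᵥ ((Gᵀ * A * G) *ᵥ v) := by
  calc (G *ᵥ v) ⬝ᵥ (A *ᵥ (G *ᵥ v)) = ((G *ᵥ v) ᵥ* A) ⬝ᵥ (G *ᵥ v) :=
        Matrix.dotProduct_mulVec _ _ _
  _ = (((v ᵥ* Gᵀ) ᵥ* A) ᵥ* G) ⬝ᵥ v := by
      rw [Matrix.vecMul_transpose, Matrix.dotProduct_mulVec]
  _ = (v ᵥ* (Gᵀ * A * G)) ⬝ᵥ v := by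
      rw [Matrix.vecMul_vecMul, Matrix.vecMul_vecMul, Matrix.mul_assoc]
  _ = v ⬝ᵥ ((Gᵀ * A * G) *ᵥ v) := (Matrix.dotProduct_mulVec _ _ _).symm

private lemma conj_dot_one {α β : Type*} [Fintype α] [Fintype β] [DecidableEq α] [DecidableEq β]
    {G : Matrix α β ℝ}
    (hG : Gᵀ * G = 1) (v : β → ℝ) : (G *ᵥ v) ⬝ᵥ (G *ᵥ v) = v ⬝ᵥ v := by
  have := conj_dot G 1 v
  rwa [Matrix.one_mulVec, Matrix.mul_one, hG, Matrix.one_mulVec] at this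

private lemma dot_diag_s5 {α : Type*} [Fintype α] [DecidableEq α] (d v : α → ℝ) :
    v ⬝ᵥ (Matrix.diagonal d *ᵥ v) = ∑ i, d i * v i ^ 2 := by
  simp only [dotProduct, Matrix.mulVec_diagonal]
  exact Finset.sum_congr rfl fun i _ => by ring

private lemma dot_self_eq {α : Type*} [Fintype α] (v : α → ℝ) : v ⬝ᵥ v = ∑ i, v i ^ 2 := by
  simp [dotProduct, sq]

open Finset in
/-- Cauchy-interlacing style counting bound: the number of eigenvalues of `PᵀKP`
exceeding `c` is at most the number of eigenvalues of `K` exceeding `c`. -/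
private lemma count_le {n s : ℕ} {P : Matrix (Fin n) (Fin s) ℝ} (hP : Pᵀ * P = 1)
    {K : Matrix (Fin n) (Fin n) ℝ} (hK : K.IsHermitian) (hB : (Pᵀ * K * P).IsHermitian)
    (c : ℝ) :
    (Finset.univ.filter fun t : Fin s => c < hB.eigenvalues t).card
      ≤ (Finset.univ.filter fun i : Fin n => c < hK.eigenvalues i).card := by
  classical
  obtain ⟨QK, hQK, hKQ⟩ := exists_orthog hK
  obtain ⟨QB, hQB, hBQ⟩ := exists_orthog hB
  set κ := hK.eigenvalues with hκ
  set μ := hB.eigenvalues with hμ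
  have hQK' : QK * QKᵀ = 1 := mul_eq_one_comm.mp hQK
  set G : Matrix (Fin n) (Fin s) ℝ := P * QB with hGdef
  have hGG : Gᵀ * G = 1 := by
    rw [hGdef, Matrix.transpose_mul]
    calc QBᵀ * Pᵀ * (P * QB) = QBᵀ * (Pᵀ * P) * QB := by simp only [Matrix.mul_assoc]
    _ = 1 := by rw [hP, Matrix.mul_one, hQB]
  have hGKG : Gᵀ * K * G = Matrix.diagonal μ := by
    rw [hGdef, Matrix.transpose_mul]
    calc QBᵀ * Pᵀ * K * (P * QB) = QBᵀ * (Pᵀ * K * P) * QB := by simp only [Matrix.mul_assoc]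
    _ = QBᵀ * (QB * (Matrix.diagonal μ * (QBᵀ * QB))) := by
        rw [hBQ]; simp only [Matrix.mul_assoc]
    _ = Matrix.diagonal μ := by
        rw [hQB, Matrix.mul_one, ← Matrix.mul_assoc, hQB, Matrix.one_mul]
  have hQKK : QKᵀ * K * QK = Matrix.diagonal κ := by
    calc QKᵀ * K * QK = QKᵀ * (QK * (Matrix.diagonal κ * (QKᵀ * QK))) := by
          rw [hKQ]; simp only [Matrix.mul_assoc]
    _ = Matrix.diagonal κ := by
        rw [hQK, Matrix.mul_one, ← Matrix.mul_assoc, hQK, Matrix.one_mul]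
  set R : Matrix (Fin n) (Fin s) ℝ := QKᵀ * G with hRdef
  set M' : Matrix {i : Fin n // c < κ i} {t : Fin s // c < μ t} ℝ :=
    R.submatrix Subtype.val Subtype.val with hM'
  have hinj : Function.Injective M'.mulVecLin := by
    rw [injective_iff_map_eq_zero]
    intro a ha
    by_contra hane
    obtain ⟨t0, ht0⟩ := Function.ne_iff.mp hane
    have ht0' : a t0 ≠ 0 := by simpa using ht0
    set abar : Fin s → ℝ := fun t => if h : c < μ t then a ⟨t, h⟩ else 0 with habar
    set x : Fin n → ℝ := G *ᵥ abar with hx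
    set z : Fin n → ℝ := R *ᵥ abar with hzdef
    have hzkey : ∀ i : Fin n, z i = ∑ t : {t : Fin s // c < μ t}, R i t.val * a t := by
      intro i
      have h1 : z i = ∑ t : Fin s, R i t * abar t := rfl
      rw [h1, ← Fintype.sum_subtype_add_sum_subtype (fun t => c < μ t)
        (fun t => R i t * abar t)]
      have h2 : ∑ t : {t : Fin s // ¬ c < μ t}, R i t.val * abar t.val = 0 := by
        apply Finset.sum_eq_zero
        intro t _
        rw [habar]; simp only [dif_neg t.prop, mul_zero]
      rw [h2, add_zero]
      exact Finset.sum_congr rfl fun t _ => by rw [habar]; simp only [dif_pos t.prop]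
    have hz0 : ∀ i : Fin n, c < κ i → z i = 0 := by
      intro i hi
      have h3 := congrFun ha ⟨i, hi⟩
      simp only [Matrix.mulVecLin_apply, Pi.zero_apply] at h3
      rw [hzkey i, ← h3]
      rfl
    have q1 : x ⬝ᵥ (K *ᵥ x) = abar ⬝ᵥ (Matrix.diagonal μ *ᵥ abar) := by
      rw [hx, conj_dot, hGKG]
    have hzx : z = QKᵀ *ᵥ x := by rw [hzdef, hx, hRdef, ← Matrix.mulVec_mulVec]
    have hxz : x = QK *ᵥ z := by
      rw [hzx, Matrix.mulVec_mulVec, hQK', Matrix.one_mulVec]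
    have q2 : x ⬝ᵥ (K *ᵥ x) = z ⬝ᵥ (Matrix.diagonal κ *ᵥ z) := by
      rw [hxz, conj_dot, hQKK]
    have q3 : x ⬝ᵥ x = z ⬝ᵥ z := by rw [hxz, conj_dot_one hQK]
    have q4 : x ⬝ᵥ x = abar ⬝ᵥ abar := by rw [hx, conj_dot_one hGG]
    have habart0 : abar t0.val = a t0 := by rw [habar]; simp [dif_pos t0.prop]
    have A1 : c * (abar ⬝ᵥ abar) < abar ⬝ᵥ (Matrix.diagonal μ *ᵥ abar) := by
      rw [dot_diag_s5, dot_self_eq, Finset.mul_sum]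
      apply Finset.sum_lt_sum
      · intro t _
        by_cases h : abar t = 0
        · simp [h]
        · have hct : c < μ t := by
            by_contra hc
            exact h (by rw [habar]; simp [dif_neg hc])
          exact mul_le_mul_of_nonneg_right hct.le (sq_nonneg _)
      · refine ⟨t0.val, Finset.mem_univ _, ?_⟩
        have h2 : (0:ℝ) < abar t0.val ^ 2 := by
          rw [habart0]
          exact (sq_nonneg _).lt_of_ne (Ne.symm (pow_ne_zero 2 ht0'))
        exact mul_lt_mul_of_pos_right t0.prop h2
    have A2 : z ⬝ᵥ (Matrix.diagonal κ *ᵥ z) ≤ c * (z ⬝ᵥ z) := by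
      rw [dot_diag_s5, dot_self_eq, Finset.mul_sum]
      apply Finset.sum_le_sum
      intro i _
      by_cases h : c < κ i
      · rw [hz0 i h]; simp
      · exact mul_le_mul_of_nonneg_right (not_lt.mp h) (sq_nonneg _)
    have hcontra : c * (abar ⬝ᵥ abar) < c * (abar ⬝ᵥ abar) := by
      calc c * (abar ⬝ᵥ abar) < abar ⬝ᵥ (Matrix.diagonal μ *ᵥ abar) := A1
      _ = x ⬝ᵥ (K *ᵥ x) := q1.symm
      _ = z ⬝ᵥ (Matrix.diagonal κ *ᵥ z) := q2
      _ ≤ c * (z ⬝ᵥ z) := A2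
      _ = c * (x ⬝ᵥ x) := by rw [q3]
      _ = c * (abar ⬝ᵥ abar) := by rw [q4]
    exact lt_irrefl _ hcontra
  have hfr := LinearMap.finrank_le_finrank_of_injective hinj
  rw [Module.finrank_pi, Module.finrank_pi] at hfr
  rwa [Fintype.card_subtype, Fintype.card_subtype] at hfr

open Finset in
private lemma sum_rpow_le {s n : ℕ} (hsn : s ≤ n) (μ : Fin s → ℝ) (lam : Fin n → ℝ)
    (hμ0 : ∀ t, 0 ≤ μ t)
    (hcount : ∀ j : Fin s,
      (Finset.univ.filter fun t => lam (Fin.castLE hsn j) < μ t).card ≤ (j : ℕ))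
    (r : ℝ) (hr : 0 ≤ r) :
    ∑ t, μ t ^ r ≤ ∑ j : Fin s, lam (Fin.castLE hsn j) ^ r := by
  classical
  set e := Tuple.sort μ with he
  have hmono : Monotone (μ ∘ e) := Tuple.monotone_sort μ
  set ν : Fin s → ℝ := fun j => μ (e (Fin.rev j)) with hν
  have hpoint : ∀ j : Fin s, ν j ≤ lam (Fin.castLE hsn j) := by
    intro j
    by_contra hlt
    push_neg at hlt
    have hsub : (Finset.Iic j).image (fun k => e (Fin.rev k))
        ⊆ Finset.univ.filter fun t => lam (Fin.castLE hsn j) < μ t := by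
      intro t ht
      obtain ⟨k, hk, rfl⟩ := Finset.mem_image.mp ht
      have hk' : j.rev ≤ k.rev := Fin.rev_le_rev.mpr (Finset.mem_Iic.mp hk)
      have : ν j ≤ μ (e (Fin.rev k)) := hmono hk'
      exact Finset.mem_filter.mpr ⟨Finset.mem_univ _, lt_of_lt_of_le hlt this⟩
    have hinj : Function.Injective fun k : Fin s => e (Fin.rev k) :=
      e.injective.comp Fin.rev_injective
    have hcard := Finset.card_le_card hsub
    rw [Finset.card_image_of_injective _ hinj, Fin.card_Iic] at hcard
    exact absurd (hcard.trans (hcount j)) (by omega)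
  have hsum : ∑ t, μ t ^ r = ∑ j : Fin s, ν j ^ r :=
    (Equiv.sum_comp (Fin.revPerm.trans e) (fun t => μ t ^ r)).symm
  rw [hsum]
  apply Finset.sum_le_sum
  intro j _
  exact Real.rpow_le_rpow (hμ0 _) (hpoint j) hr

/-- with singular values `σ₁ ≥ ⋯ ≥ σₙ ≥ 0` of `Φ` (so `K = ΦᵀΦ` has the
spectral decomposition `V diag(σ²) Vᵀ`), `Σ_{i>s} σ_i^p` equals
`Tr(K^{p/2})` minus the maximum of `Tr((PᵀKP)^{p/2})` over `PᵀP = I_s`. -/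
theorem stmt5 (l n s : ℕ) (hnl : n ≤ l) (hs1 : 1 ≤ s) (hsn : s ≤ n)
    (p : ℝ) (hp0 : 0 < p) (hp1 : p ≤ 1)
    (Φ : Matrix (Fin l) (Fin n) ℝ)
    (K : Matrix (Fin n) (Fin n) ℝ) (hKdef : K = Φᵀ * Φ)
    (σ : Fin n → ℝ) (hσpos : ∀ i, 0 ≤ σ i) (hsort : Antitone σ)
    (V : Matrix (Fin n) (Fin n) ℝ) (hV : Vᵀ * V = 1)
    (hVK : K = V * Matrix.diagonal (fun i => σ i ^ 2) * Vᵀ) :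
    ∃ M : ℝ,
      IsGreatest
        {t : ℝ | ∃ P : Matrix (Fin n) (Fin s) ℝ, Pᵀ * P = 1 ∧ t = trRpow (Pᵀ * K * P) (p / 2)}
        M ∧
      ∑ i ∈ Finset.univ.filter (fun i : Fin n => s ≤ (i : ℕ)), σ i ^ p
        = trRpow K (p / 2) - M := by
  classical
  set lam : Fin n → ℝ := fun i => σ i ^ 2 with hlam
  have hlam_anti : Antitone lam := fun i j hij => by
    exact pow_le_pow_left₀ (hσpos j) (hsort hij) 2
  -- rpow arithmetic : (σ²)^{p/2} = σ^p
  have hrp : ∀ x : ℝ, 0 ≤ x → (x ^ 2 : ℝ) ^ (p / 2) = x ^ p := by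
    intro x hx
    rw [← Real.rpow_natCast x 2, ← Real.rpow_mul hx]
    norm_num
    rw [show (2:ℝ) * (p/2) = p by ring]
  -- K is PSD Hermitian
  have hKpsd : K.PosSemidef := by
    have := Matrix.posSemidef_conjTranspose_mul_self Φ
    rwa [Matrix.conjTranspose_eq_transpose_of_trivial, ← hKdef] at this
  have hK : K.IsHermitian := hKpsd.isHermitian
  -- the candidate maximum
  set M : ℝ := ∑ j : Fin s, σ (Fin.castLE hsn j) ^ p with hM
  have hV' : V * Vᵀ = 1 := mul_eq_one_comm.mp hV
  -- trRpow of K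
  have htrK : trRpow K (p / 2) = ∑ i, σ i ^ p := by
    simp only [trRpow, dif_pos hK]
    rw [sum_f_eigen hK hV lam hVK (fun x => x ^ (p / 2))]
    exact Finset.sum_congr rfl fun i _ => hrp _ (hσpos i)
  -- the optimal P₀ : first s columns of V
  set P0 : Matrix (Fin n) (Fin s) ℝ := V.submatrix id (Fin.castLE hsn) with hP0def
  have hVKV : Vᵀ * K * V = Matrix.diagonal lam := by
    calc Vᵀ * K * V = Vᵀ * (V * (Matrix.diagonal lam * (Vᵀ * V))) := by
          rw [hVK]; simp only [Matrix.mul_assoc]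
    _ = Matrix.diagonal lam := by
        rw [hV, Matrix.mul_one, ← Matrix.mul_assoc, hV, Matrix.one_mul]
  have hP0 : P0ᵀ * P0 = 1 := by
    ext a b
    have h : (Vᵀ * V) (Fin.castLE hsn a) (Fin.castLE hsn b)
        = (1 : Matrix (Fin n) (Fin n) ℝ) (Fin.castLE hsn a) (Fin.castLE hsn b) := by rw [hV]
    simp only [hP0def, Matrix.mul_apply, Matrix.transpose_apply, Matrix.submatrix_apply, id,
      Matrix.one_apply] at h ⊢
    rw [h]
    simp [Fin.castLE_inj]
  have hdiag : P0ᵀ * K * P0 = Matrix.diagonal (fun j : Fin s => lam (Fin.castLE hsn j)) := by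
    ext a b
    have h : (Vᵀ * K * V) (Fin.castLE hsn a) (Fin.castLE hsn b)
        = Matrix.diagonal lam (Fin.castLE hsn a) (Fin.castLE hsn b) := by rw [hVKV]
    have hL : (P0ᵀ * K * P0) a b = (Vᵀ * K * V) (Fin.castLE hsn a) (Fin.castLE hsn b) := by
      simp only [hP0def, Matrix.mul_apply, Matrix.transpose_apply, Matrix.submatrix_apply, id]
    rw [hL, h]
    rcases eq_or_ne a b with rfl | hne
    · simp [Matrix.diagonal_apply_eq]
    · rw [Matrix.diagonal_apply_ne _ (fun hc => hne (by
        exact Fin.castLE_injective hsn hc)), Matrix.diagonal_apply_ne _ hne]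
  have hB0 : (P0ᵀ * K * P0).IsHermitian := by
    rw [hdiag]; exact Matrix.isHermitian_diagonal _
  have hval0 : trRpow (P0ᵀ * K * P0) (p / 2) = M := by
    simp only [trRpow, dif_pos hB0]
    rw [sum_f_eigen hB0 (U := 1) (by simp) (fun j : Fin s => lam (Fin.castLE hsn j))
      (by rw [hdiag]; simp) (fun x => x ^ (p / 2))]
    exact Finset.sum_congr rfl fun j _ => hrp _ (hσpos _)
  -- upper bound for arbitrary P
  have hub : ∀ t ∈ {t : ℝ | ∃ P : Matrix (Fin n) (Fin s) ℝ,
      Pᵀ * P = 1 ∧ t = trRpow (Pᵀ * K * P) (p / 2)}, t ≤ M := by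
    rintro t ⟨P, hP, rfl⟩
    have hBform : Pᵀ * K * P = (Φ * P)ᵀ * (Φ * P) := by
      rw [hKdef, Matrix.transpose_mul]
      simp only [Matrix.mul_assoc]
    have hBpsd : (Pᵀ * K * P).PosSemidef := by
      rw [hBform]
      have := Matrix.posSemidef_conjTranspose_mul_self (Φ * P)
      rwa [Matrix.conjTranspose_eq_transpose_of_trivial] at this
    have hB : (Pᵀ * K * P).IsHermitian := hBpsd.isHermitian
    have hμ0 : ∀ t, 0 ≤ hB.eigenvalues t := fun t => hBpsd.eigenvalues_nonneg t
    have hcount : ∀ j : Fin s,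
        (Finset.univ.filter fun t => lam (Fin.castLE hsn j) < hB.eigenvalues t).card
          ≤ (j : ℕ) := by
      intro j
      have h1 := count_le hP hK hB (lam (Fin.castLE hsn j))
      rw [count_f_eigen hK hV lam hVK] at h1
      refine h1.trans ?_
      have hsub : (Finset.univ.filter fun i : Fin n => lam (Fin.castLE hsn j) < lam i)
          ⊆ Finset.Iio (Fin.castLE hsn j) := by
        intro i hi
        rw [Finset.mem_filter] at hi
        rw [Finset.mem_Iio]
        by_contra hc
        exact absurd (hlam_anti (not_lt.mp hc)) (not_le.mpr hi.2)
      have := Finset.card_le_card hsub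
      rwa [Fin.card_Iio] at this
    have hle := sum_rpow_le hsn hB.eigenvalues lam hμ0 hcount (p / 2) (by positivity)
    simp only [trRpow, dif_pos hB]
    refine hle.trans (le_of_eq ?_)
    exact Finset.sum_congr rfl fun j _ => hrp _ (hσpos _)
  refine ⟨M, ⟨⟨P0, hP0, hval0.symm⟩, hub⟩, ?_⟩
  -- final arithmetic
  have hsplit : ∑ i, σ i ^ p
      = (∑ i ∈ Finset.univ.filter (fun i : Fin n => s ≤ (i : ℕ)), σ i ^ p)
        + ∑ i ∈ Finset.univ.filter (fun i : Fin n => ¬ s ≤ (i : ℕ)), σ i ^ p :=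
    (Finset.sum_filter_add_sum_filter_not _ _ _).symm
  have hMeq : ∑ i ∈ Finset.univ.filter (fun i : Fin n => ¬ s ≤ (i : ℕ)), σ i ^ p = M := by
    rw [hM]
    rw [show (Finset.univ.filter (fun i : Fin n => ¬ s ≤ (i : ℕ)))
        = Finset.univ.map (Fin.castLEEmb hsn) from ?_]
    · rw [Finset.sum_map]
      rfl
    · ext i
      simp only [Finset.mem_filter, Finset.mem_univ, true_and, Finset.mem_map, not_le]
      constructor
      · intro hi
        exact ⟨⟨(i : ℕ), hi⟩, by simp [Fin.castLEEmb, Fin.castLE]⟩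
      · rintro ⟨j, rfl⟩
        simpa using j.isLt
  rw [htrK, hsplit, hMeq]
  ring
end

section
/- Let X = [X^{(1)}, …, X^{(k)}] ∈ ℝ^{m×(kn)} where each block X^{(j)} ∈ ℝ^{m×n} has columns given by a (possibly different) polynomial map f^{(j)} : ℝ^d → ℝ^m of degree at most α evaluated at points in ℝ^d. Let φ be a q-order polynomial feature map on ℝ^m. Then rank(φ(X)) ≤ min{k·C(d+αq, αq), C(m+q, q), kn}. -/
open Matrix

lemma finsupp_apply_le_sum {d : ℕ} (μ : Fin d →₀ ℕ) (ℓ : Fin d) :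
    μ ℓ ≤ μ.sum (fun _ t => t) := by
  by_cases h : ℓ ∈ μ.support
  · exact Finset.single_le_sum (fun _ _ => Nat.zero_le _) h
  · simp [Finsupp.notMem_support_iff.mp h]

lemma card_monomials (d N : ℕ) (hd : 0 < d)
    [Fintype {μ : Fin d →₀ ℕ // μ.sum (fun _ t => t) ≤ N}] :
    Fintype.card {μ : Fin d →₀ ℕ // μ.sum (fun _ t => t) ≤ N} = (d + N).choose N := by
  haveI I1 : ∀ n : ℕ, Fintype {μ : Fin d →₀ ℕ // μ.sum (fun _ t => t) = n} :=
    fun n => Fintype.ofEquiv (Sym (Fin d) n) (Sym.equivNatSum (Fin d) n)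
  have E : {μ : Fin d →₀ ℕ // μ.sum (fun _ t => t) ≤ N} ≃
      Σ n : Fin (N + 1), {μ : Fin d →₀ ℕ // μ.sum (fun _ t => t) = (n : ℕ)} :=
    { toFun := fun μ => ⟨⟨μ.1.sum (fun _ t => t), Nat.lt_succ_of_le μ.2⟩, ⟨μ.1, rfl⟩⟩
      invFun := fun x => ⟨x.2.1, by rw [x.2.2]; exact Nat.lt_succ_iff.mp x.1.2⟩
      left_inv := fun μ => rfl
      right_inv := by rintro ⟨⟨n, hn⟩, μ, h⟩; dsimp at h; subst h; rfl }
  have hfib : ∀ n : ℕ, Fintype.card {μ : Fin d →₀ ℕ // μ.sum (fun _ t => t) = n}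
      = (n + (d - 1)).choose (d - 1) := by
    intro n
    have h1 : Fintype.card {μ : Fin d →₀ ℕ // μ.sum (fun _ t => t) = n}
        = Fintype.card (Sym (Fin d) n) :=
      Fintype.card_congr (Sym.equivNatSum (Fin d) n).symm
    rw [h1, Sym.card_sym_eq_choose, Fintype.card_fin,
      show d + n - 1 = n + (d - 1) by omega]
    exact Nat.choose_symm_add
  rw [Fintype.card_congr E, Fintype.card_sigma]
  calc (∑ n : Fin (N + 1),
          Fintype.card {μ : Fin d →₀ ℕ // μ.sum (fun _ t => t) = (n : ℕ)})
      = ∑ n ∈ Finset.range (N + 1),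
          Fintype.card {μ : Fin d →₀ ℕ // μ.sum (fun _ t => t) = n} :=
        Fin.sum_univ_eq_sum_range
          (fun n => Fintype.card {μ : Fin d →₀ ℕ // μ.sum (fun _ t => t) = n}) (N + 1)
    _ = ∑ n ∈ Finset.range (N + 1), (n + (d - 1)).choose (d - 1) :=
        Finset.sum_congr rfl fun n _ => hfib n
    _ = (N + (d - 1) + 1).choose ((d - 1) + 1) := Nat.sum_range_add_choose N (d - 1)
    _ = (d + N).choose N := by
        rw [show N + (d - 1) + 1 = d + N by omega, show (d - 1) + 1 = d by omega]
        exact Nat.choose_symm_add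



/-- if `X = [X⁽¹⁾, …, X⁽ᵏ⁾]` where each block has columns given by a
polynomial map `f⁽ʲ⁾ : ℝ^d → ℝ^m` of degree ≤ α, and `φ` is a `q`-order polynomial
feature map, then `rank φ(X) ≤ min (k·C(d+αq, αq)) (min (C(m+q,q)) (k·n))`. -/
theorem stmt12 (d α m n q k : ℕ) (hd : 0 < d) (hα : 0 < α) (hq : 0 < q) (hk : 0 < k)
    (ι : Type) [Fintype ι] [DecidableEq ι]
    (φ : (Fin m → ℝ) → ι → ℝ) (hφ : IsPolyFeatureMap q φ)
    (hcard : Fintype.card ι = (m + q).choose q)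
    (X : Matrix (Fin m) (Fin k × Fin n) ℝ)
    (hX : ∀ j : Fin k,
      ∃ f : (Fin d → ℝ) → (Fin m → ℝ),
        (∀ i : Fin m, ∃ p : MvPolynomial (Fin d) ℝ,
          p.totalDegree ≤ α ∧ ∀ z, f z i = MvPolynomial.eval z p) ∧
        ∃ z : Fin n → (Fin d → ℝ), ∀ i t, X i (j, t) = f (z t) i)
    (φX : Matrix ι (Fin k × Fin n) ℝ)
    (hφX : ∀ i c, φX i c = φ (fun t => X t c) i) :
    φX.rank ≤ min (k * (d + α * q).choose (α * q)) (min ((m + q).choose q) (k * n)) := by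
  obtain ⟨e, c, hc, hphi⟩ := hφ
  choose f hf using hX
  choose p hp using fun j => (hf j).1
  have hdeg : ∀ j i, (p j i).totalDegree ≤ α := fun j i => (hp j i).1
  have heval : ∀ j i zz, f j zz i = MvPolynomial.eval zz (p j i) := fun j i zz => (hp j i).2 zz
  choose z hz using fun j => (hf j).2
  set N := α * q with hN
  set P : Fin k → ι → MvPolynomial (Fin d) ℝ :=
    fun j i => MvPolynomial.C (c i) * ((e i : Fin m →₀ ℕ).prod fun ℓ t => (p j ℓ) ^ t) with hP
  have hPdeg : ∀ j i, (P j i).totalDegree ≤ N := by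
    intro j i
    refine le_trans (MvPolynomial.totalDegree_mul _ _) ?_
    rw [MvPolynomial.totalDegree_C, zero_add, Finsupp.prod]
    refine le_trans (MvPolynomial.totalDegree_finset_prod _ _) ?_
    calc (∑ ℓ ∈ (e i : Fin m →₀ ℕ).support, ((p j ℓ) ^ ((e i : Fin m →₀ ℕ) ℓ)).totalDegree)
        ≤ ∑ ℓ ∈ (e i : Fin m →₀ ℕ).support, (e i : Fin m →₀ ℕ) ℓ * α :=
          Finset.sum_le_sum fun ℓ _ =>
            le_trans (MvPolynomial.totalDegree_pow _ _) (Nat.mul_le_mul_left _ (hdeg j ℓ))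
      _ = ((e i : Fin m →₀ ℕ).sum fun _ t => t) * α := by rw [Finsupp.sum, Finset.sum_mul]
      _ ≤ q * α := Nat.mul_le_mul_right _ (e i).2
      _ = N := Nat.mul_comm q α
  have hentry : ∀ i j t, φX i (j, t) = MvPolynomial.eval (z j t) (P j i) := by
    intro i j t
    rw [hφX, hphi, hP]
    simp only [Finsupp.prod, _root_.map_mul, map_prod, map_pow, MvPolynomial.eval_C]
    congr 1
    refine Finset.prod_congr rfl fun ℓ _ => ?_
    rw [hz j ℓ t, heval j ℓ (z j t)]
  classical
  set Mx : Fin d →₀ ℕ := Finsupp.equivFunOnFinite.symm (fun _ => N) with hMx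
  set T : Finset (Fin d →₀ ℕ) :=
    (Finset.Iic Mx).filter (fun μ => μ.sum (fun _ t => t) ≤ N) with hTdef
  have hT : ∀ μ : Fin d →₀ ℕ, μ ∈ T ↔ μ.sum (fun _ t => t) ≤ N := by
    intro μ
    constructor
    · exact fun h => (Finset.mem_filter.mp h).2
    · intro h
      refine Finset.mem_filter.mpr ⟨Finset.mem_Iic.mpr ?_, h⟩
      rw [Finsupp.le_def]
      intro ℓ
      have hMxℓ : Mx ℓ = N := rfl
      rw [hMxℓ]
      exact le_trans (finsupp_apply_le_sum μ ℓ) h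
  letI instS : Fintype {μ : Fin d →₀ ℕ // μ.sum (fun _ t => t) ≤ N} := Fintype.subtype T hT
  set V : Fin k × {μ : Fin d →₀ ℕ // μ.sum (fun _ t => t) ≤ N} → (ι → ℝ) :=
    fun x i => MvPolynomial.coeff x.2.1 (P x.1 i) with hV
  have hcol : ∀ (j : Fin k) (t : Fin n),
      φXᵀ (j, t) = ∑ μ ∈ T, (∏ ℓ, (z j t ℓ) ^ (μ ℓ)) •
        (fun i => MvPolynomial.coeff μ (P j i)) := by
    intro j t
    funext i
    rw [Finset.sum_apply]
    simp only [Pi.smul_apply, smul_eq_mul]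
    have hsub : (P j i).support ⊆ T := fun μ hμ =>
      (hT μ).mpr (le_trans (MvPolynomial.le_totalDegree hμ) (hPdeg j i))
    have hzero : ∀ μ ∈ T, μ ∉ (P j i).support →
        MvPolynomial.coeff μ (P j i) * ∏ ℓ, (z j t ℓ) ^ (μ ℓ) = 0 := fun μ _ h => by
      rw [MvPolynomial.notMem_support_iff.mp h, zero_mul]
    rw [Matrix.transpose_apply, hentry i j t, MvPolynomial.eval_eq',
      Finset.sum_subset hsub hzero]
    exact Finset.sum_congr rfl fun μ _ => mul_comm _ _
  have hspan : Submodule.span ℝ (Set.range φXᵀ) ≤ Submodule.span ℝ (Set.range V) := by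
    rw [Submodule.span_le]
    rintro _ ⟨⟨j, t⟩, rfl⟩
    rw [hcol j t]
    refine Submodule.sum_mem _ fun μ hμ => Submodule.smul_mem _ _ ?_
    exact Submodule.subset_span ⟨(j, ⟨μ, (hT μ).mp hμ⟩), rfl⟩
  have hb1 : φX.rank ≤ k * (d + N).choose N := by
    rw [Matrix.rank_eq_finrank_span_cols]
    haveI : FiniteDimensional ℝ (Submodule.span ℝ (Set.range V)) :=
      FiniteDimensional.span_of_finite ℝ (Set.finite_range V)
    refine le_trans (Submodule.finrank_mono hspan) (le_trans (finrank_range_le_card V) ?_)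
    rw [Fintype.card_prod, Fintype.card_fin, card_monomials d N hd]
  refine le_min hb1 (le_min ?_ ?_)
  · exact hcard ▸ φX.rank_le_card_height
  · have h := φX.rank_le_card_width
    rwa [Fintype.card_prod, Fintype.card_fin, Fintype.card_fin] at h
end
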